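/- The function h_d defined on edge subsets F of a coloured graph by h_d(F) = min{k(F), |V(F)| - (d+1)} is submodular: for all X, Y ⊆ E, h_d(X) + h_d(Y) ≥ h_d(X ∪ Y) + h_d(X ∩ Y). -/
import Mathlib


open Finset

attribute [local instance] Classical.propDecidable

noncomputable section

variable {V C : Type*}

/-- The set of vertices spanned by an edge set. -/
def eVerts [Fintype V] [DecidableEq V] (F : Finset (Sym2 V)) : Finset V :=
  Finset.univ.filter fun v => ∃ e ∈ F, v ∈ e

/-- The set of colours appearing on the vertices spanned by an edge set. -/
def eCols [Fintype V] [DecidableEq V] [DecidableEq C] (χ : V → Option C)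
    (F : Finset (Sym2 V)) : Finset C :=
  (eVerts F).biUnion fun v => (χ v).toFinset

/-- The number of colours appearing on the vertices spanned by an edge set. -/
def kCount [Fintype V] [DecidableEq V] [DecidableEq C] (χ : V → Option C)
    (F : Finset (Sym2 V)) : ℤ :=
  (eCols χ F).card

/-- The set of all colours used by the colouring. -/
def usedCols [Fintype V] [DecidableEq C] (χ : V → Option C) : Finset C :=
  Finset.univ.biUnion fun v => (χ v).toFinset

/-- The number of connected components of the graph `(V(F), F)`. -/
def omegaCount [Fintype V] [DecidableEq V] (F : Finset (Sym2 V)) : ℤ :=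
  ((eVerts F).image fun v =>
    (eVerts F).filter fun u =>
      (SimpleGraph.fromEdgeSet (↑F : Set (Sym2 V))).Reachable v u).card

/-- The function `h_d(F) = min{k(F), |V(F)| - (d+1)}`. -/
def hFun [Fintype V] [DecidableEq V] [DecidableEq C] (χ : V → Option C) (d : ℕ)
    (F : Finset (Sym2 V)) : ℤ :=
  min (kCount χ F) (((eVerts F).card : ℤ) - (d + 1))

/-- A vertex is colour-isolated if it is coloured and no other vertex has its colour. -/
def ColourIsolated (χ : V → Option C) (v : V) : Prop :=
  ∃ c, χ v = some c ∧ ∀ u, u ≠ v → χ u ≠ some c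

section Aux

variable [Fintype V] [DecidableEq V] [DecidableEq C]

lemma eVerts_union (X Y : Finset (Sym2 V)) :
    eVerts (X ∪ Y) = eVerts X ∪ eVerts Y := by
  ext v; simp only [eVerts, Finset.mem_filter, Finset.mem_union, Finset.mem_univ, true_and]
  aesop

lemma eVerts_mono {X Y : Finset (Sym2 V)} (h : X ⊆ Y) : eVerts X ⊆ eVerts Y := by
  intro v hv
  simp only [eVerts, Finset.mem_filter, Finset.mem_univ, true_and] at hv ⊢
  obtain ⟨e, he, hv⟩ := hv
  exact ⟨e, h he, hv⟩

lemma eVerts_inter_subset (X Y : Finset (Sym2 V)) :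
    eVerts (X ∩ Y) ⊆ eVerts X ∩ eVerts Y :=
  Finset.subset_inter (eVerts_mono Finset.inter_subset_left)
    (eVerts_mono Finset.inter_subset_right)

/-- colours of a vertex set -/
def colsOf (χ : V → Option C) (S : Finset V) : Finset C :=
  S.biUnion fun v => (χ v).toFinset

lemma colsOf_mono (χ : V → Option C) {S T : Finset V} (h : S ⊆ T) :
    colsOf χ S ⊆ colsOf χ T :=
  Finset.biUnion_subset_biUnion_of_subset_left _ h

lemma colsOf_union (χ : V → Option C) (S T : Finset V) :
    colsOf χ (S ∪ T) = colsOf χ S ∪ colsOf χ T := by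
  ext c
  simp only [colsOf, Finset.mem_biUnion, Finset.mem_union]
  aesop

lemma colsOf_card_le (χ : V → Option C) (S : Finset V) :
    (colsOf χ S).card ≤ S.card := by
  refine le_trans (Finset.card_biUnion_le) ?_
  calc ∑ v ∈ S, ((χ v).toFinset).card ≤ ∑ _v ∈ S, 1 := by
        refine Finset.sum_le_sum fun v _ => ?_
        cases χ v <;> simp [Option.toFinset]
    _ = S.card := by simp

lemma eCols_eq (χ : V → Option C) (F : Finset (Sym2 V)) :
    eCols χ F = colsOf χ (eVerts F) := rfl

/-- kCount is submodular -/
lemma kCount_submod (χ : V → Option C) (X Y : Finset (Sym2 V)) :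
    kCount χ (X ∪ Y) + kCount χ (X ∩ Y) ≤ kCount χ X + kCount χ Y := by
  have h1 : eCols χ (X ∪ Y) = eCols χ X ∪ eCols χ Y := by
    rw [eCols_eq, eVerts_union, colsOf_union]; rfl
  have h2 : eCols χ (X ∩ Y) ⊆ eCols χ X ∩ eCols χ Y := by
    refine subset_trans (colsOf_mono χ (eVerts_inter_subset X Y)) ?_
    exact Finset.subset_inter
      (colsOf_mono χ Finset.inter_subset_left)
      (colsOf_mono χ Finset.inter_subset_right)
  have := Finset.card_union_add_card_inter (eCols χ X) (eCols χ Y)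
  have h3 : (eCols χ (X ∩ Y)).card ≤ (eCols χ X ∩ eCols χ Y).card :=
    Finset.card_le_card h2
  unfold kCount
  rw [h1]
  push_cast
  omega

/-- vertex count is submodular -/
lemma verts_submod (X Y : Finset (Sym2 V)) :
    (eVerts (X ∪ Y)).card + (eVerts (X ∩ Y)).card ≤ (eVerts X).card + (eVerts Y).card := by
  have := Finset.card_union_add_card_inter (eVerts X) (eVerts Y)
  have h3 : (eVerts (X ∩ Y)).card ≤ (eVerts X ∩ eVerts Y).card :=
    Finset.card_le_card (eVerts_inter_subset X Y)
  rw [eVerts_union]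
  omega

/-- |V(F)| - k(F) is monotone -/
lemma diff_mono (χ : V → Option C) {X Y : Finset (Sym2 V)} (h : X ⊆ Y) :
    ((eVerts X).card : ℤ) - kCount χ X ≤ ((eVerts Y).card : ℤ) - kCount χ Y := by
  have hV : eVerts X ⊆ eVerts Y := eVerts_mono h
  have h1 : eCols χ Y ⊆ eCols χ X ∪ colsOf χ (eVerts Y \ eVerts X) := by
    rw [eCols_eq, eCols_eq, ← colsOf_union]
    exact colsOf_mono χ (by rw [Finset.union_sdiff_of_subset hV])
  have h2 : (eCols χ Y).card ≤ (eCols χ X).card + (eVerts Y \ eVerts X).card :=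
    le_trans (Finset.card_le_card h1)
      (le_trans (Finset.card_union_le _ _)
        (by exact Nat.add_le_add_left (colsOf_card_le χ _) _))
  have h3 : (eVerts Y \ eVerts X).card = (eVerts Y).card - (eVerts X).card :=
    Finset.card_sdiff_of_subset hV
  have h4 : (eVerts X).card ≤ (eVerts Y).card := Finset.card_le_card hV
  unfold kCount
  omega

end Aux

/-- `h_d` is submodular on edge subsets of `G`. -/
theorem hFun_submodular {V C : Type*} [Fintype V] [DecidableEq V] [DecidableEq C]
    (G : SimpleGraph V) (χ : V → Option C) (d : ℕ) (hd : 0 < d)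
    (X Y : Finset (Sym2 V)) (hXE : ∀ e ∈ X, e ∈ G.edgeSet) (hYE : ∀ e ∈ Y, e ∈ G.edgeSet) :
    hFun χ d (X ∪ Y) + hFun χ d (X ∩ Y) ≤ hFun χ d X + hFun χ d Y := by
  have hf := kCount_submod χ X Y
  have hg := verts_submod X Y
  have hm1 := diff_mono χ (Finset.subset_union_left (s₁ := X) (s₂ := Y))
  have hm2 := diff_mono χ (Finset.subset_union_right (s₁ := X) (s₂ := Y))
  unfold hFun
  omega
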